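/- Let g(t) be the 4×4 matrix with g₁₁ = 1+t², g₁₄ = g₄₁ = t, g₂₂ = g₃₃ = g₄₄ = 1, other entries 0. Then for all t > 0, g(t) = exp((1/2)R(t)(X⊗X − Y⊗Y) + (t/4)R(t)(Z⊗I + I⊗Z)), where R(t) = (1+t²/4)^{−1/2} · log(1 + t√(1+t²/4) + t²/2). -/

import Mathlib

open Kronecker Complex

noncomputable def PauliX : Matrix (Fin 2) (Fin 2) ℂ := !![0, 1; 1, 0]
noncomputable def PauliY : Matrix (Fin 2) (Fin 2) ℂ := !![0, -I; I, 0]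
noncomputable def PauliZ : Matrix (Fin 2) (Fin 2) ℂ := !![1, 0; 0, -1]

/-- Reindex a `(Fin 2 × Fin 2)`-indexed matrix as a `Fin 4`-indexed matrix. -/
noncomputable def K (M : Matrix (Fin 2 × Fin 2) (Fin 2 × Fin 2) ℂ) : Matrix (Fin 4) (Fin 4) ℂ :=
  Matrix.reindex finProdFinEquiv finProdFinEquiv M

noncomputable def gMat (t : ℝ) : Matrix (Fin 4) (Fin 4) ℂ :=
  !![1 + (t:ℂ)^2, 0, 0, (t:ℂ); 0, 1, 0, 0; 0, 0, 1, 0; (t:ℂ), 0, 0, 1]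

noncomputable def R (t : ℝ) : ℝ :=
  Real.log (1 + t * Real.sqrt (1 + t ^ 2 / 4) + t ^ 2 / 2) / Real.sqrt (1 + t ^ 2 / 4)

set_option maxHeartbeats 1000000

lemma A_eq (a b : ℝ) :
    ((a : ℂ)) • (K (PauliX ⊗ₖ PauliX) - K (PauliY ⊗ₖ PauliY)) +
        ((b : ℝ) : ℂ) • (K (PauliZ ⊗ₖ (1 : Matrix (Fin 2) (Fin 2) ℂ)) +
           K ((1 : Matrix (Fin 2) (Fin 2) ℂ) ⊗ₖ PauliZ))
    = !![2*(b:ℂ), 0, 0, 2*(a:ℂ); 0, 0, 0, 0; 0, 0, 0, 0; 2*(a:ℂ), 0, 0, -(2*(b:ℂ))] := by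
  have e0 : finProdFinEquiv.symm (0 : Fin 4) = ((0 : Fin 2), (0 : Fin 2)) := by decide
  have e1 : finProdFinEquiv.symm (1 : Fin 4) = ((0 : Fin 2), (1 : Fin 2)) := by decide
  have e2 : finProdFinEquiv.symm (2 : Fin 4) = ((1 : Fin 2), (0 : Fin 2)) := by decide
  have e3 : finProdFinEquiv.symm (3 : Fin 4) = ((1 : Fin 2), (1 : Fin 2)) := by decide
  ext i j
  fin_cases i <;> fin_cases j <;>
    simp [K, Matrix.reindex_apply, Matrix.submatrix_apply, e0, e1, e2, e3,
      PauliX, PauliY, PauliZ, Matrix.kroneckerMap_apply, Matrix.one_apply,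
      Matrix.vecHead, Matrix.vecTail] <;> ring

lemma diag4 (a b c d : ℂ) : Matrix.diagonal ![a,b,c,d]
    = !![a,0,0,0; 0,b,0,0; 0,0,c,0; 0,0,0,d] := by
  ext i j; fin_cases i <;> fin_cases j <;>
    simp [Matrix.diagonal_apply, Matrix.vecHead, Matrix.vecTail]

section Calc
variable (u t r c : ℂ)

noncomputable def Umat : Matrix (Fin 4) (Fin 4) ℂ :=
  !![1, 0, 0, 1; 0, 1, 0, 0; 0, 0, 1, 0; u - t/2, 0, 0, -(u + t/2)]
noncomputable def Vmat : Matrix (Fin 4) (Fin 4) ℂ :=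
  !![(u + t/2)/(2*u), 0, 0, 1/(2*u); 0, 1, 0, 0; 0, 0, 1, 0;
     (u - t/2)/(2*u), 0, 0, -(1/(2*u))]

lemma UV_eq (hu0 : u ≠ 0) : Umat u t * Vmat u t = 1 := by
  ext i j
  fin_cases i <;> fin_cases j <;>
    simp [Umat, Vmat, Matrix.mul_apply, Fin.sum_univ_four, Matrix.one_apply,
      Matrix.vecHead, Matrix.vecTail] <;>
    field_simp <;> ring

lemma UDV_eq (hu : u ^ 2 = 1 + t ^ 2 / 4) (hu0 : u ≠ 0) :
    Umat u t * !![r*u,0,0,0; 0,0,0,0; 0,0,0,0; 0,0,0,-(r*u)] * Vmat u t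
      = !![t*r/2, 0, 0, r; 0, 0, 0, 0; 0, 0, 0, 0; r, 0, 0, -(t*r/2)] := by
  ext i j
  fin_cases i <;> fin_cases j <;>
    simp [Umat, Vmat, Matrix.mul_apply, Fin.sum_univ_four,
      Matrix.vecHead, Matrix.vecTail] <;>
    field_simp <;> first | ring1 | linear_combination 8*u*r*hu | linear_combination 8*r*(1-u)*hu |
      linear_combination 8*r*hu | linear_combination -8*r*hu | linear_combination -8*u*r*hu |
      linear_combination 8*r*(u-1)*hu

lemma UEV_eq (d : ℂ) (hu : u ^ 2 = 1 + t ^ 2 / 4) (hu0 : u ≠ 0)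
    (hc : c = (u + t / 2) ^ 2) (hcinv : d = (u - t / 2) ^ 2) :
    Umat u t * !![c,0,0,0; 0,1,0,0; 0,0,1,0; 0,0,0,d] * Vmat u t
      = !![1 + t^2, 0, 0, t; 0, 1, 0, 0; 0, 0, 1, 0; t, 0, 0, 1] := by
  ext i j
  fin_cases i <;> fin_cases j <;>
    simp [Umat, Vmat, Matrix.mul_apply, Fin.sum_univ_four,
      Matrix.vecHead, Matrix.vecTail, hc, hcinv] <;>
    field_simp <;>
    first | ring1 | linear_combination 16*u*hu | linear_combination 32*u*t*hu
end Calc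

theorem stmt_2 (t : ℝ) (ht : 0 < t) :
    gMat t = NormedSpace.exp
      (((R t / 2 : ℝ) : ℂ) • (K (PauliX ⊗ₖ PauliX) - K (PauliY ⊗ₖ PauliY)) +
        ((t * R t / 4 : ℝ) : ℂ) •
          (K (PauliZ ⊗ₖ (1 : Matrix (Fin 2) (Fin 2) ℂ)) +
           K ((1 : Matrix (Fin 2) (Fin 2) ℂ) ⊗ₖ PauliZ))) := by
  set u : ℝ := Real.sqrt (1 + t ^ 2 / 4) with hu_def
  have hq : (0:ℝ) < 1 + t ^ 2 / 4 := by positivity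
  have hu2 : u ^ 2 = 1 + t ^ 2 / 4 := Real.sq_sqrt hq.le
  have hupos : 0 < u := Real.sqrt_pos.mpr hq
  set c : ℝ := 1 + t * u + t ^ 2 / 2 with hc_def
  have hcpos : 0 < c := by positivity
  have hcu : c = (u + t / 2) ^ 2 := by linear_combination -hu2
  have hrc : Real.exp (R t * u) = c := by
    have : R t * u = Real.log c := by
      rw [R, hc_def, hu_def]; field_simp
    rw [this, Real.exp_log hcpos]
  have hrc' : Real.exp (-(R t * u)) = c⁻¹ := by rw [Real.exp_neg, hrc]
  -- complex versions
  have huC : (u:ℂ) ^ 2 = 1 + (t:ℂ) ^ 2 / 4 := by exact_mod_cast congrArg (Complex.ofReal) hu2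
  have hu0C : (u:ℂ) ≠ 0 := by exact_mod_cast hupos.ne'
  have hcC : (c:ℂ) = ((u:ℂ) + (t:ℂ) / 2) ^ 2 := by exact_mod_cast congrArg (Complex.ofReal) hcu
  have hone : (c:ℂ) * ((u:ℂ) - (t:ℂ)/2) ^ 2 = 1 := by
    rw [hcC]; linear_combination ((u:ℂ)^2 - (t:ℂ)^2/4 + 1) * huC
  have hdC : ((c:ℂ))⁻¹ = ((u:ℂ) - (t:ℂ)/2) ^ 2 := inv_eq_of_mul_eq_one_right hone
  -- the argument matrix
  have hArg : ((R t / 2 : ℝ) : ℂ) • (K (PauliX ⊗ₖ PauliX) - K (PauliY ⊗ₖ PauliY)) +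
        ((t * R t / 4 : ℝ) : ℂ) •
          (K (PauliZ ⊗ₖ (1 : Matrix (Fin 2) (Fin 2) ℂ)) +
           K ((1 : Matrix (Fin 2) (Fin 2) ℂ) ⊗ₖ PauliZ))
      = Umat (u:ℂ) (t:ℂ) *
          Matrix.diagonal ![(R t : ℂ) * (u:ℂ), 0, 0, -((R t : ℂ) * (u:ℂ))] *
          Vmat (u:ℂ) (t:ℂ) := by
    rw [A_eq, diag4, UDV_eq (u:ℂ) (t:ℂ) (R t : ℂ) huC hu0C]
    ext i j
    fin_cases i <;> fin_cases j <;>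
      simp [Matrix.vecHead, Matrix.vecTail] <;> push_cast <;> ring
  rw [hArg]
  have hUV : Umat (u:ℂ) (t:ℂ) * Vmat (u:ℂ) (t:ℂ) = 1 := UV_eq _ _ hu0C
  have hVU : Vmat (u:ℂ) (t:ℂ) * Umat (u:ℂ) (t:ℂ) = 1 := mul_eq_one_comm.mp hUV
  have hUnit : IsUnit (Umat (u:ℂ) (t:ℂ)) :=
    ⟨⟨Umat (u:ℂ) (t:ℂ), Vmat (u:ℂ) (t:ℂ), hUV, hVU⟩, rfl⟩
  have hUinv : (Umat (u:ℂ) (t:ℂ))⁻¹ = Vmat (u:ℂ) (t:ℂ) := Matrix.inv_eq_right_inv hUV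
  rw [← hUinv, Matrix.exp_conj _ _ hUnit, Matrix.exp_diagonal, hUinv]
  have hexpD : (NormedSpace.exp (![(R t : ℂ) * (u:ℂ), 0, 0, -((R t : ℂ) * (u:ℂ))] : Fin 4 → ℂ))
      = ![(c:ℂ), 1, 1, ((c:ℂ))⁻¹] := by
    rw [Pi.exp_def]
    funext i
    fin_cases i <;>
      simp [← Complex.exp_eq_exp_ℂ, Matrix.vecHead, Matrix.vecTail] <;>
      rw [show ((R t : ℂ) * (u:ℂ)) = ((R t * u : ℝ) : ℂ) by push_cast; ring]
    · rw [← Complex.ofReal_exp, hrc]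
    · rw [← Complex.ofReal_neg, ← Complex.ofReal_exp, hrc', Complex.ofReal_inv]
  rw [hexpD, diag4, UEV_eq (u:ℂ) (t:ℂ) (c:ℂ) ((c:ℂ))⁻¹ huC hu0C hcC hdC]
  rfl
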